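/- Assume hypotheses (H1), (H2) and (H3). Then for every ε > 0 there exists N ∈ ℕ such that for all ω ∈ Ω, all k ≥ 1, all points x₀,x₁,…,x_k ∈ M and all integers b₀ < a₁ ≤ b₁ < a₂ ≤ b₂ < ⋯ < a_k ≤ b_k < a_{k+1} satisfying a₁ ≥ b₀ + N, a_{i+1} ≥ b_i + N for i = 1,…,k, there exists z ∈ M such that: (i) d_M(F_ω^j x_i, F_ω^j z) ≤ ε for every i ∈ {1,…,k} and every integer j with a_i ≤ j ≤ b_i; (ii) d_M(F_ω^j x₀, F_ω^j z) ≤ ε for every integer j ≥ a_{k+1}; and (iii) d_M(F_ω^j x₀, F_ω^j z) ≤ ε for every integer j ≤ b₀. (This is the specification property of Gundlach–Kifer, holding here for every ω with N independent of ω and k.) -/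

import Mathlib

open Set Filter Topology MeasureTheory ENNReal NNReal

noncomputable section

namespace Paper

variable {Ω M : Type*} [MetricSpace Ω] [MetricSpace M]

/-- Fiber forward iterates `F_ω^n = F_{θ^{n-1}ω} ∘ ⋯ ∘ F_ω` as homeomorphisms. -/
def fIterH (θ : Ω ≃ₜ Ω) (F : Ω → M ≃ₜ M) (ω : Ω) : ℕ → (M ≃ₜ M)
  | 0 => Homeomorph.refl M
  | n + 1 => (fIterH θ F ω n).trans (F ((⇑θ)^[n] ω))

/-- Fiber iterates `F_ω^t` for `t ∈ ℤ`, with `F_ω^{-n} = (F_{θ^{-n}ω}^n)⁻¹`. -/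
def fIterZ (θ : Ω ≃ₜ Ω) (F : Ω → M ≃ₜ M) (ω : Ω) : ℤ → (M ≃ₜ M)
  | Int.ofNat n => fIterH θ F ω n
  | Int.negSucc n => (fIterH θ F ((⇑θ.symm)^[n + 1] ω) (n + 1)).symm

/-- The iterates `θ^t` of the base homeomorphism, `t ∈ ℤ`. -/
def thIterZ (θ : Ω ≃ₜ Ω) : ℤ → Ω → Ω
  | Int.ofNat n => (⇑θ)^[n]
  | Int.negSucc n => (⇑θ.symm)^[n + 1]

/-- Local stable set `W^s_ε(ω,x)`. -/
def Ws (θ : Ω ≃ₜ Ω) (F : Ω → M ≃ₜ M) (ε : ℝ) (ω : Ω) (x : M) : Set M :=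
  {y | ∀ n : ℕ, dist (fIterH θ F ω n x) (fIterH θ F ω n y) ≤ ε}

/-- Local unstable set `W^u_ε(ω,x)`. -/
def Wu (θ : Ω ≃ₜ Ω) (F : Ω → M ≃ₜ M) (ε : ℝ) (ω : Ω) (x : M) : Set M :=
  {y | ∀ n : ℕ, dist (fIterZ θ F ω (-(n : ℤ)) x) (fIterZ θ F ω (-(n : ℤ)) y) ≤ ε}

section Aux
variable (θ : Ω ≃ₜ Ω) (F : Ω → M ≃ₜ M)

lemma thIterZ_succ (t : ℤ) (ω : Ω) : thIterZ θ (t + 1) ω = θ (thIterZ θ t ω) := by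
  cases t with
  | ofNat n =>
      show thIterZ θ (Int.ofNat (n+1)) ω = _
      simp [thIterZ, Function.iterate_succ_apply']
  | negSucc n =>
      cases n with
      | zero =>
          show thIterZ θ (Int.ofNat 0) ω = θ (thIterZ θ (Int.negSucc 0) ω)
          simp [thIterZ]
      | succ m =>
          show thIterZ θ (Int.negSucc m) ω = θ (thIterZ θ (Int.negSucc (m+1)) ω)
          simp [thIterZ, Function.iterate_succ_apply']

lemma thIterZ_pred (t : ℤ) (ω : Ω) : thIterZ θ (t - 1) ω = θ.symm (thIterZ θ t ω) := by
  have h := thIterZ_succ θ (t - 1) ω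
  rw [sub_add_cancel] at h
  rw [h]; simp

lemma thIterZ_zero (ω : Ω) : thIterZ θ 0 ω = ω := rfl

lemma thIterZ_add (s t : ℤ) (ω : Ω) :
    thIterZ θ (s + t) ω = thIterZ θ t (thIterZ θ s ω) := by
  induction t using Int.induction_on with
  | zero => simp [thIterZ_zero]
  | succ n ih =>
      have h : s + ((n : ℤ) + 1) = (s + n) + 1 := by ring
      rw [h, thIterZ_succ, ih, ← thIterZ_succ]
  | pred n ih =>
      have h : s + (-(n : ℤ) - 1) = (s + (-n)) - 1 := by ring
      rw [h, thIterZ_pred, ih, ← thIterZ_pred]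

lemma fIterH_add (ω : Ω) (m n : ℕ) :
    fIterH θ F ω (m + n) = (fIterH θ F ω m).trans (fIterH θ F ((⇑θ)^[m] ω) n) := by
  induction n with
  | zero => simp [fIterH]; rfl
  | succ n ih =>
      show fIterH θ F ω ((m + n) + 1) = _
      rw [show fIterH θ F ω ((m+n)+1) = (fIterH θ F ω (m+n)).trans (F ((⇑θ)^[m+n] ω)) from rfl,
        ih]
      rw [show fIterH θ F ((⇑θ)^[m] ω) (n+1) = (fIterH θ F ((⇑θ)^[m] ω) n).trans (F ((⇑θ)^[n] ((⇑θ)^[m] ω))) from rfl]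
      ext x
      simp [Homeomorph.trans_apply, ← Function.iterate_add_apply, Nat.add_comm n m]

lemma fIterZ_coe (ω : Ω) (n : ℕ) : fIterZ θ F ω (n : ℤ) = fIterH θ F ω n := rfl

lemma fIterZ_zero (ω : Ω) (x : M) : fIterZ θ F ω 0 x = x := rfl

lemma fIterZ_succ (t : ℤ) (ω : Ω) (x : M) :
    fIterZ θ F ω (t + 1) x = F (thIterZ θ t ω) (fIterZ θ F ω t x) := by
  cases t with
  | ofNat n =>
      show fIterZ θ F ω (Int.ofNat (n+1)) x = _
      rfl
  | negSucc n =>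
      cases n with
      | zero =>
          show fIterZ θ F ω (Int.ofNat 0) x = F (thIterZ θ (Int.negSucc 0) ω) (fIterZ θ F ω (Int.negSucc 0) x)
          show x = F ((⇑θ.symm)^[1] ω) ((fIterH θ F ((⇑θ.symm)^[1] ω) 1).symm x)
          have h1 : ∀ (ω' : Ω) (y : M), fIterH θ F ω' 1 y = F ω' y := fun ω' y => rfl
          have h2 := h1 ((⇑θ.symm)^[1] ω) ((fIterH θ F ((⇑θ.symm)^[1] ω) 1).symm x)
          rw [← h2]; simp
      | succ m =>
          show fIterZ θ F ω (Int.negSucc m) x = F (thIterZ θ (Int.negSucc (m+1)) ω) (fIterZ θ F ω (Int.negSucc (m+1)) x)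
          show (fIterH θ F ((⇑θ.symm)^[m+1] ω) (m+1)).symm x
            = F ((⇑θ.symm)^[m+2] ω) ((fIterH θ F ((⇑θ.symm)^[m+2] ω) (m+2)).symm x)
          set ω₂ := (⇑θ.symm)^[m+2] ω with hω₂
          have hth : (⇑θ)^[1] ω₂ = (⇑θ.symm)^[m+1] ω := by
            show θ ((⇑θ.symm)^[m+2] ω) = _
            simp [← Function.iterate_succ_apply, Function.iterate_succ_apply']
          have hsplit : fIterH θ F ω₂ (m+2) = (fIterH θ F ω₂ 1).trans (fIterH θ F ((⇑θ)^[1] ω₂) (m+1)) := by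
            rw [show m + 2 = 1 + (m+1) from by omega, fIterH_add]
          rw [hsplit, hth]
          have h1 : ∀ y : M, fIterH θ F ω₂ 1 y = F ω₂ y := fun y => rfl
          have key : ∀ y : M, F ω₂ ((fIterH θ F ω₂ 1).symm y) = y := by
            intro y
            rw [← h1 ((fIterH θ F ω₂ 1).symm y)]
            exact (fIterH θ F ω₂ 1).apply_symm_apply y
          rw [show ((fIterH θ F ω₂ 1).trans (fIterH θ F ((⇑θ.symm)^[m+1] ω) (m+1))).symm x = (fIterH θ F ω₂ 1).symm ((fIterH θ F ((⇑θ.symm)^[m+1] ω) (m+1)).symm x) from rfl, key]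

lemma fIterZ_pred (t : ℤ) (ω : Ω) (x : M) :
    fIterZ θ F ω (t - 1) x = (F (thIterZ θ (t-1) ω)).symm (fIterZ θ F ω t x) := by
  have h := fIterZ_succ θ F (t - 1) ω x
  rw [sub_add_cancel] at h
  rw [h]; simp

lemma fIterZ_add (ω : Ω) (s t : ℤ) (x : M) :
    fIterZ θ F ω (s + t) x = fIterZ θ F (thIterZ θ s ω) t (fIterZ θ F ω s x) := by
  induction t using Int.induction_on with
  | zero => simp [fIterZ_zero]
  | succ n ih =>
      have h : s + ((n : ℤ) + 1) = (s + n) + 1 := by ring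
      rw [h, fIterZ_succ, ih, thIterZ_add, ← fIterZ_succ]
  | pred n ih =>
      have h : s + (-(n : ℤ) - 1) = (s + (-n)) - 1 := by ring
      rw [h, fIterZ_pred, ih,
        show s + -(n:ℤ) - 1 = s + (-(n:ℤ) - 1) from by ring, thIterZ_add, ← fIterZ_pred]

def orb (ω : Ω) (s : ℤ) (w : M) (j : ℤ) : M :=
  fIterZ θ F (thIterZ θ s ω) (j - s) w

lemma orb_self (ω : Ω) (s : ℤ) (w : M) : orb θ F ω s w s = w := by
  show fIterZ θ F _ (s - s) w = w
  rw [sub_self]; rfl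

lemma orb_zero (ω : Ω) (w : M) (j : ℤ) : orb θ F ω 0 w j = fIterZ θ F ω j w := by
  show fIterZ θ F (thIterZ θ 0 ω) (j - 0) w = _
  rw [sub_zero]; rfl

lemma orb_orb (ω : Ω) (s t j : ℤ) (w : M) :
    orb θ F ω t (orb θ F ω s w t) j = orb θ F ω s w j := by
  show fIterZ θ F (thIterZ θ t ω) (j - t) (fIterZ θ F (thIterZ θ s ω) (t - s) w)
    = fIterZ θ F (thIterZ θ s ω) (j - s) w
  have hb : thIterZ θ t ω = thIterZ θ (t - s) (thIterZ θ s ω) := by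
    rw [← thIterZ_add]; congr 1; ring
  rw [hb, ← fIterZ_add]
  congr 1; ring

lemma orb_eq_fIterH (ω : Ω) (s j : ℤ) (w : M) (hj : s ≤ j) :
    orb θ F ω s w j = fIterH θ F (thIterZ θ s ω) (j - s).toNat w := by
  show fIterZ θ F (thIterZ θ s ω) (j - s) w = _
  rw [show j - s = (((j - s).toNat : ℕ) : ℤ) from (Int.toNat_of_nonneg (by omega)).symm]
  rfl

lemma orb_eq_neg (ω : Ω) (s j : ℤ) (w : M) (hj : j ≤ s) :
    orb θ F ω s w j = fIterZ θ F (thIterZ θ s ω) (-(((s - j).toNat : ℕ) : ℤ)) w := by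
  show fIterZ θ F (thIterZ θ s ω) (j - s) w = _
  congr 1
  rw [Int.toNat_of_nonneg (by omega)]; ring

lemma dist_le_of_Ws {η : ℝ} {ω' : Ω} {w q : M} (hq : q ∈ Ws θ F η ω' w) :
    dist w q ≤ η := hq 0

lemma dist_le_of_Wu {η : ℝ} {ω' : Ω} {w q : M} (hq : q ∈ Wu θ F η ω' w) :
    dist w q ≤ η := by
  have h := hq 0
  simpa [fIterZ_zero] using h

lemma orb_bound_Ws {η : ℝ} {ω : Ω} {s : ℤ} {w q : M}
    (hq : q ∈ Ws θ F η (thIterZ θ s ω) w) {j : ℤ} (hj : s ≤ j) :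
    dist (orb θ F ω s w j) (orb θ F ω s q j) ≤ η := by
  rw [orb_eq_fIterH θ F ω s j w hj, orb_eq_fIterH θ F ω s j q hj]
  exact hq _

lemma orb_bound_Wu {η : ℝ} {ω : Ω} {s : ℤ} {w q : M}
    (hq : q ∈ Wu θ F η (thIterZ θ s ω) w) {j : ℤ} (hj : j ≤ s) :
    dist (orb θ F ω s w j) (orb θ F ω s q j) ≤ η := by
  rw [orb_eq_neg θ F ω s j w hj, orb_eq_neg θ F ω s j q hj]
  exact hq _

lemma orb_track_Ws {lam η : ℝ}
    (H1s : ∀ (ω' : Ω) (w q : M), q ∈ Ws θ F η ω' w →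
      ∀ n : ℕ, dist (fIterH θ F ω' n w) (fIterH θ F ω' n q) ≤
        Real.exp (-(n : ℝ) * lam) * dist w q)
    {ω : Ω} {s : ℤ} {w q : M}
    (hq : q ∈ Ws θ F η (thIterZ θ s ω) w) {j : ℤ} (hj : s ≤ j) :
    dist (orb θ F ω s w j) (orb θ F ω s q j) ≤
      Real.exp (-((j : ℝ) - s) * lam) * dist w q := by
  rw [orb_eq_fIterH θ F ω s j w hj, orb_eq_fIterH θ F ω s j q hj]
  have h := H1s _ _ _ hq (j - s).toNat
  have hc : (((j - s).toNat : ℕ) : ℝ) = (j : ℝ) - s := by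
    have : (((j - s).toNat : ℕ) : ℤ) = j - s := Int.toNat_of_nonneg (by omega)
    exact_mod_cast congrArg (fun z : ℤ => (z : ℝ)) this
  rwa [hc] at h

lemma orb_track_Wu {lam η : ℝ}
    (H1u : ∀ (ω' : Ω) (w q : M), q ∈ Wu θ F η ω' w →
      ∀ n : ℕ, dist (fIterZ θ F ω' (-(n : ℤ)) w) (fIterZ θ F ω' (-(n : ℤ)) q) ≤
        Real.exp (-(n : ℝ) * lam) * dist w q)
    {ω : Ω} {s : ℤ} {w q : M}
    (hq : q ∈ Wu θ F η (thIterZ θ s ω) w) {j : ℤ} (hj : j ≤ s) :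
    dist (orb θ F ω s w j) (orb θ F ω s q j) ≤
      Real.exp (-((s : ℝ) - j) * lam) * dist w q := by
  rw [orb_eq_neg θ F ω s j w hj, orb_eq_neg θ F ω s j q hj]
  have h := H1u _ _ _ hq (s - j).toNat
  have hc : (((s - j).toNat : ℕ) : ℝ) = (s : ℝ) - j := by
    have : (((s - j).toNat : ℕ) : ℤ) = s - j := Int.toNat_of_nonneg (by omega)
    exact_mod_cast congrArg (fun z : ℤ => (z : ℝ)) this
  rwa [hc] at h

lemma uniform_mixing [CompactSpace M]
    (H3 : ∀ U V : Set M, IsOpen U → IsOpen V → U.Nonempty → V.Nonempty →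
      ∃ N : ℕ, ∀ n : ℕ, N ≤ n → ∀ ω : Ω,
        ((fun z => fIterH θ F ω n z) '' U ∩ V).Nonempty)
    (δ : ℝ) (hδ : 0 < δ) :
    ∃ N : ℕ, ∀ n : ℕ, N ≤ n → ∀ (ω : Ω) (p P : M),
      ∃ u : M, dist u p < δ ∧ dist (fIterH θ F ω n u) P < δ := by
  rcases isEmpty_or_nonempty M with hM | hM
  · exact ⟨0, fun n _ ω p P => isEmptyElim p⟩
  have htb := (isCompact_univ : IsCompact (Set.univ : Set M)).totallyBounded
  rw [Metric.totallyBounded_iff] at htb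
  obtain ⟨t, htf, htc⟩ := htb (δ/2) (by positivity)
  have hball : ∀ c : M, (Metric.ball c (δ/2)).Nonempty :=
    fun c => ⟨c, Metric.mem_ball_self (by positivity)⟩
  have hex : ∀ c c' : M, ∃ N : ℕ, ∀ n : ℕ, N ≤ n → ∀ ω : Ω,
      ((fun z => fIterH θ F ω n z) '' Metric.ball c (δ/2) ∩ Metric.ball c' (δ/2)).Nonempty :=
    fun c c' => H3 _ _ Metric.isOpen_ball Metric.isOpen_ball (hball c) (hball c')
  classical
  let Nf : M → M → ℕ := fun c c' => (hex c c').choose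
  let T : Finset M := htf.toFinset
  refine ⟨(T ×ˢ T).sup (fun p => Nf p.1 p.2), fun n hn ω p P => ?_⟩
  have hp : p ∈ ⋃ y ∈ t, Metric.ball y (δ/2) := htc (Set.mem_univ p)
  have hP : P ∈ ⋃ y ∈ t, Metric.ball y (δ/2) := htc (Set.mem_univ P)
  simp only [Set.mem_iUnion, exists_prop] at hp hP
  obtain ⟨c, hct, hpc⟩ := hp
  obtain ⟨c', hct', hPc⟩ := hP
  have hmem : (c, c') ∈ T ×ˢ T := by
    simp [T, Set.Finite.mem_toFinset, hct, hct']
  have hNle : Nf c c' ≤ n :=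
    le_trans (Finset.le_sup (f := fun p : M × M => Nf p.1 p.2) hmem) hn
  obtain ⟨y, ⟨u, hu, rfl⟩, hy⟩ := (hex c c').choose_spec n hNle ω
  refine ⟨u, ?_, ?_⟩
  · calc dist u p ≤ dist u c + dist c p := dist_triangle _ _ _
      _ < δ/2 + δ/2 := add_lt_add (by simpa [Metric.mem_ball] using hu)
          (by simpa [Metric.mem_ball, dist_comm] using hpc)
      _ = δ := by ring
  · calc dist (fIterH θ F ω n u) P ≤ dist (fIterH θ F ω n u) c' + dist c' P := dist_triangle _ _ _
      _ < δ/2 + δ/2 := add_lt_add (by simpa [Metric.mem_ball] using hy)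
          (by simpa [Metric.mem_ball, dist_comm] using hPc)
      _ = δ := by ring

lemma glue_step {lam η δ : ℝ} (hη : 0 < η) (hδ : 0 < δ) (hlam : 0 < lam)
    (H1s' : ∀ (ω' : Ω) (w q : M), q ∈ Ws θ F η ω' w →
      ∀ n : ℕ, dist (fIterH θ F ω' n w) (fIterH θ F ω' n q) ≤
        Real.exp (-(n : ℝ) * lam) * dist w q)
    (H1u' : ∀ (ω' : Ω) (w q : M), q ∈ Wu θ F η ω' w →
      ∀ n : ℕ, dist (fIterZ θ F ω' (-(n : ℤ)) w) (fIterZ θ F ω' (-(n : ℤ)) q) ≤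
        Real.exp (-(n : ℝ) * lam) * dist w q)
    (H2' : ∀ (ω' : Ω) (y z : M), dist y z < δ →
      ∃ v : M, v ∈ Ws θ F η ω' y ∩ Wu θ F η ω' z)
    {N Nmix : ℕ}
    (hmix : ∀ n : ℕ, Nmix ≤ n → ∀ (ω' : Ω) (p P : M),
      ∃ u : M, dist u p < δ/4 ∧ dist (fIterH θ F ω' n u) P < δ/4)
    (hNN : Nmix ≤ N)
    (hNhalf : Real.exp (-(N : ℝ) * lam) ≤ 1/2)
    (hNdelta : η * Real.exp (-(N : ℝ) * lam) ≤ δ/4)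
    (ω : Ω) (s t : ℤ) (hst : s + (N : ℤ) ≤ t) (xa P : M) :
    ∃ q : M,
      (∀ j : ℤ, j ≤ s → dist (orb θ F ω 0 xa j) (orb θ F ω s q j) ≤ η) ∧
      (∀ j : ℤ, t ≤ j → dist (orb θ F ω t P j) (orb θ F ω s q j) ≤
        2 * η * Real.exp (-((j : ℝ) - t) * lam)) := by
  set p := orb θ F ω 0 xa s with hp
  set n := (t - s).toNat with hndef
  have hn : (n : ℤ) = t - s := Int.toNat_of_nonneg (by omega)
  have hnN : N ≤ n := by omega
  obtain ⟨u, hup, huP⟩ := hmix n (le_trans hNN hnN) (thIterZ θ s ω) p P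
  set w := orb θ F ω s u t with hw
  have hwH : w = fIterH θ F (thIterZ θ s ω) n u := by
    rw [hw, orb_eq_fIterH θ F ω s t u (by omega)]
  have hPw : dist P w < δ := by
    rw [hwH, dist_comm]
    exact lt_trans huP (by linarith)
  obtain ⟨v, hvs, hvu⟩ := H2' (thIterZ θ t ω) P w hPw
  set u' := orb θ F ω t v s with hu'
  -- expN : exp at time difference t - s bounded by exp(-N lam)
  have hNts : (N : ℝ) ≤ (t : ℝ) - s := by
    have : (N : ℤ) ≤ t - s := by omega
    exact_mod_cast this
  have hexpN : Real.exp (-((t : ℝ) - s) * lam) ≤ Real.exp (-(N : ℝ) * lam) :=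
    Real.exp_le_exp.mpr (by nlinarith)
  have huu' : dist u u' ≤ η * Real.exp (-(N : ℝ) * lam) := by
    have htrack := orb_track_Wu θ F H1u' hvu (j := s) (by omega)
    have hwu : orb θ F ω t w s = u := by
      rw [hw, orb_orb, orb_self]
    rw [hwu] at htrack
    have hdwv : dist w v ≤ η := dist_le_of_Wu θ F hvu
    calc dist u u' ≤ Real.exp (-((t : ℝ) - s) * lam) * dist w v := htrack
      _ ≤ Real.exp (-(N : ℝ) * lam) * η := by
          apply mul_le_mul hexpN hdwv dist_nonneg (Real.exp_nonneg _)
      _ = η * Real.exp (-(N : ℝ) * lam) := by ring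
  have hu'p : dist u' p < δ := by
    calc dist u' p ≤ dist u' u + dist u p := dist_triangle _ _ _
      _ < δ/4 + δ/4 := by
          apply add_lt_add_of_le_of_lt _ hup
          rw [dist_comm]; exact le_trans huu' hNdelta
      _ < δ := by linarith
  obtain ⟨q, hqs, hqu⟩ := H2' (thIterZ θ s ω) u' p hu'p
  refine ⟨q, fun j hj => ?_, fun j hj => ?_⟩
  · have h0 : orb θ F ω 0 xa j = orb θ F ω s p j := (orb_orb θ F ω 0 s j xa).symm
    rw [h0]
    exact orb_bound_Wu θ F hqu hj
  · have hjs : s ≤ j := by omega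
    have d1 : dist (orb θ F ω t P j) (orb θ F ω t v j) ≤
        Real.exp (-((j : ℝ) - t) * lam) * η := by
      calc dist (orb θ F ω t P j) (orb θ F ω t v j) ≤
            Real.exp (-((j : ℝ) - t) * lam) * dist P v :=
          orb_track_Ws θ F H1s' hvs hj
        _ ≤ Real.exp (-((j : ℝ) - t) * lam) * η := by
            apply mul_le_mul_of_nonneg_left (dist_le_of_Ws θ F hvs) (Real.exp_nonneg _)
    have heq : orb θ F ω s u' j = orb θ F ω t v j := orb_orb θ F ω t s j v
    have d2 : dist (orb θ F ω t v j) (orb θ F ω s q j) ≤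
        Real.exp (-((j : ℝ) - t) * lam) * η / 2 := by
      rw [← heq]
      calc dist (orb θ F ω s u' j) (orb θ F ω s q j) ≤
            Real.exp (-((j : ℝ) - s) * lam) * dist u' q :=
          orb_track_Ws θ F H1s' hqs hjs
        _ ≤ Real.exp (-((j : ℝ) - s) * lam) * η := by
            apply mul_le_mul_of_nonneg_left (dist_le_of_Ws θ F hqs) (Real.exp_nonneg _)
        _ ≤ Real.exp (-((j : ℝ) - t) * lam) * η / 2 := by
            have hsplit : Real.exp (-((j : ℝ) - s) * lam)
                = Real.exp (-((j : ℝ) - t) * lam) * Real.exp (-((t : ℝ) - s) * lam) := by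
              rw [← Real.exp_add]; ring_nf
            rw [hsplit]
            have h12 : Real.exp (-((t : ℝ) - s) * lam) ≤ 1/2 := le_trans hexpN hNhalf
            have h0 := Real.exp_nonneg (-((j : ℝ) - t) * lam)
            nlinarith [mul_le_mul_of_nonneg_right (mul_le_mul_of_nonneg_left h12 h0) hη.le]
    calc dist (orb θ F ω t P j) (orb θ F ω s q j) ≤
          dist (orb θ F ω t P j) (orb θ F ω t v j)
            + dist (orb θ F ω t v j) (orb θ F ω s q j) := dist_triangle _ _ _
      _ ≤ Real.exp (-((j : ℝ) - t) * lam) * η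
            + Real.exp (-((j : ℝ) - t) * lam) * η / 2 := add_le_add d1 d2
      _ ≤ 2 * η * Real.exp (-((j : ℝ) - t) * lam) := by
          have := Real.exp_nonneg (-((j : ℝ) - t) * lam)
          nlinarith

end Aux

set_option maxHeartbeats 1000000 in
/-- under (H1),(H2),(H3), the Gundlach–Kifer specification property holds
for every `ω`, with the gap `N` independent of `ω` and of `k`. -/
theorem gundlach_kifer_specification
    [CompactSpace Ω] [CompactSpace M]
    (θ : Ω ≃ₜ Ω) (F : Ω → M ≃ₜ M)
    (hF : Continuous fun p : Ω × M => F p.1 p.2)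
    (ε₀ lam : ℝ) (hε₀ : 0 < ε₀) (hlam : 0 < lam)
    -- (H1), stable part
    (H1s : ∀ ε : ℝ, 0 < ε → ε ≤ ε₀ → ∀ (ω : Ω) (x y : M), y ∈ Ws θ F ε ω x →
      ∀ n : ℕ, dist (fIterH θ F ω n x) (fIterH θ F ω n y) ≤
        Real.exp (-(n : ℝ) * lam) * dist x y)
    -- (H1), unstable part
    (H1u : ∀ ε : ℝ, 0 < ε → ε ≤ ε₀ → ∀ (ω : Ω) (x y : M), y ∈ Wu θ F ε ω x →
      ∀ n : ℕ, dist (fIterZ θ F ω (-(n : ℤ)) x) (fIterZ θ F ω (-(n : ℤ)) y) ≤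
        Real.exp (-(n : ℝ) * lam) * dist x y)
    -- (H2), local product structure
    (H2 : ∀ ε : ℝ, 0 < ε → ε ≤ ε₀ → ∃ δ : ℝ, 0 < δ ∧ δ < ε ∧
      ∀ (ω : Ω) (x y : M), dist x y < δ → ∃! z : M, z ∈ Ws θ F ε ω x ∩ Wu θ F ε ω y)
    -- (H3), topological mixing on fibers
    (H3 : ∀ U V : Set M, IsOpen U → IsOpen V → U.Nonempty → V.Nonempty →
      ∃ N : ℕ, ∀ n : ℕ, N ≤ n → ∀ ω : Ω,
        ((fun z => fIterH θ F ω n z) '' U ∩ V).Nonempty) :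
    ∀ ε : ℝ, 0 < ε → ∃ N : ℕ,
      ∀ (ω : Ω) (k : ℕ), 1 ≤ k → ∀ (x : ℕ → M) (a b : ℕ → ℤ),
        -- ordering: b₀ < a₁ ≤ b₁ < a₂ ≤ ⋯ ≤ b_k < a_{k+1}
        (∀ i, 1 ≤ i → i ≤ k → a i ≤ b i) →
        (∀ i, i ≤ k → b i < a (i + 1)) →
        -- spacing: a_{i+1} ≥ b_i + N for i = 0,…,k
        (∀ i, i ≤ k → b i + (N : ℤ) ≤ a (i + 1)) →
        ∃ z : M,
          (∀ i, 1 ≤ i → i ≤ k → ∀ j : ℤ, a i ≤ j → j ≤ b i →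
            dist (fIterZ θ F ω j (x i)) (fIterZ θ F ω j z) ≤ ε) ∧
          (∀ j : ℤ, a (k + 1) ≤ j →
            dist (fIterZ θ F ω j (x 0)) (fIterZ θ F ω j z) ≤ ε) ∧
          (∀ j : ℤ, j ≤ b 0 →
            dist (fIterZ θ F ω j (x 0)) (fIterZ θ F ω j z) ≤ ε) := by
  intro ε hε
  set η : ℝ := min ε ε₀ / 5 with hηdef
  have hη : 0 < η := by
    have := lt_min hε hε₀
    rw [hηdef]; linarith
  have hηε₀ : η ≤ ε₀ := by
    have h1 : min ε ε₀ ≤ ε₀ := min_le_right _ _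
    rw [hηdef]; linarith
  have h5η : 5 * η ≤ ε := by
    have h1 : min ε ε₀ ≤ ε := min_le_left _ _
    rw [hηdef]; linarith
  obtain ⟨δ, hδ0, hδη, hH2⟩ := H2 η hη hηε₀
  have H1s' := H1s η hη hηε₀
  have H1u' := H1u η hη hηε₀
  have H2' : ∀ (ω' : Ω) (y z : M), dist y z < δ →
      ∃ v : M, v ∈ Ws θ F η ω' y ∩ Wu θ F η ω' z :=
    fun ω' y z h => (hH2 ω' y z h).exists
  obtain ⟨Nmix, hmix⟩ := uniform_mixing θ F H3 (δ/4) (by positivity)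
  set r : ℝ := min (1/2) (δ/(4*η)) with hrdef
  have hr : 0 < r := lt_min (by norm_num) (by positivity)
  obtain ⟨N₁, hN₁⟩ := exists_nat_ge ((1/r)/lam)
  have hN₁exp : Real.exp (-(N₁ : ℝ) * lam) ≤ r := by
    have h1 : 1/r ≤ (N₁ : ℝ) * lam := by
      have := (div_le_iff₀ hlam).mp hN₁
      linarith
    have h2 : 1/r ≤ Real.exp ((N₁ : ℝ) * lam) := by
      have := Real.add_one_le_exp ((N₁ : ℝ) * lam)
      linarith
    rw [show -(N₁ : ℝ) * lam = -((N₁ : ℝ) * lam) from by ring, Real.exp_neg,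
      inv_eq_one_div, div_le_iff₀ (Real.exp_pos _)]
    have h3 := mul_le_mul_of_nonneg_left h2 hr.le
    have h4 : r * (1/r) = 1 := by field_simp
    linarith
  set N : ℕ := max Nmix N₁ with hNdef
  have hNN : Nmix ≤ N := le_max_left _ _
  have hmono : Real.exp (-(N : ℝ) * lam) ≤ Real.exp (-(N₁ : ℝ) * lam) := by
    apply Real.exp_le_exp.mpr
    have h1 : (N₁ : ℝ) ≤ (N : ℝ) := Nat.cast_le.mpr (le_max_right _ _)
    nlinarith
  have hNhalf : Real.exp (-(N : ℝ) * lam) ≤ 1/2 :=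
    le_trans hmono (le_trans hN₁exp (min_le_left _ _))
  have hNdelta : η * Real.exp (-(N : ℝ) * lam) ≤ δ/4 := by
    have h1 : Real.exp (-(N : ℝ) * lam) ≤ δ/(4*η) :=
      le_trans hmono (le_trans hN₁exp (min_le_right _ _))
    have h2 := mul_le_mul_of_nonneg_left h1 hη.le
    have h3 : η * (δ/(4*η)) = δ/4 := by field_simp
    linarith
  refine ⟨N, ?_⟩
  intro ω k hk x a b hab hba hgap
  -- iterated gap estimate
  have hgap' : ∀ l d : ℕ, 1 ≤ l → l + d ≤ k + 1 → a l + (N : ℤ) * d ≤ a (l + d) := by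
    intro l d hl
    induction d with
    | zero => intro _; simp
    | succ d ih =>
        intro hld
        have h1 : a l + (N : ℤ) * d ≤ a (l + d) := ih (by omega)
        have h2 : a (l + d) ≤ b (l + d) := hab (l + d) (by omega) (by omega)
        have h3 : b (l + d) + (N : ℤ) ≤ a ((l + d) + 1) := hgap (l + d) (by omega)
        have hidx : l + (d + 1) = (l + d) + 1 := by omega
        rw [hidx]
        push_cast
        push_cast at h1
        linarith
  -- main downward induction
  have main : ∀ c i : ℕ, i + c = k →
      ∃ q : M,
        (∀ j : ℤ, j ≤ b i → dist (fIterZ θ F ω j (x i)) (orb θ F ω (b i) q j) ≤ η) ∧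
        (∀ m : ℕ, i < m → m ≤ k → ∀ j : ℤ, a m ≤ j → j ≤ b m →
          dist (fIterZ θ F ω j (x m)) (orb θ F ω (b i) q j)
            ≤ η + 4*η*(1 - (1/2 : ℝ)^(m - i))) ∧
        (∀ j : ℤ, a (k+1) ≤ j → dist (fIterZ θ F ω j (x 0)) (orb θ F ω (b i) q j)
            ≤ 4*η*(1 - (1/2 : ℝ)^(k + 1 - i))) := by
    intro c
    induction c with
    | zero =>
        intro i hik
        obtain rfl : i = k := by omega
        obtain ⟨q, hA, hG⟩ := glue_step θ F hη hδ0 hlam H1s' H1u' H2' hmix hNN hNhalf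
          hNdelta ω (b i) (a (i+1)) (by have := hgap i le_rfl; omega) (x i)
          (orb θ F ω 0 (x 0) (a (i+1)))
        refine ⟨q, fun j hj => ?_, fun m hm1 hm2 j hj1 hj2 => absurd hm2 (by omega), fun j hj => ?_⟩
        · rw [← orb_zero θ F ω (x i) j]; exact hA j hj
        · have h1 := hG j hj
          rw [orb_orb θ F ω 0 (a (i+1)) j (x 0)] at h1
          rw [← orb_zero θ F ω (x 0) j]
          refine le_trans h1 ?_
          rw [show i + 1 - i = 1 from by omega, pow_one]
          have hjr : ((a (i+1) : ℤ) : ℝ) ≤ (j : ℝ) := by exact_mod_cast hj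
          have he : Real.exp (-((j : ℝ) - (a (i+1))) * lam) ≤ 1 := by
            have : Real.exp (-((j : ℝ) - (a (i+1))) * lam) ≤ Real.exp 0 :=
              Real.exp_le_exp.mpr (by nlinarith)
            simpa using this
          linarith [mul_le_mul_of_nonneg_left he (by positivity : (0:ℝ) ≤ 2*η)]
    | succ c ih =>
        intro i hik
        obtain ⟨q', hA', hB', hC'⟩ := ih (i+1) (by omega)
        obtain ⟨q, hA, hG⟩ := glue_step θ F hη hδ0 hlam H1s' H1u' H2' hmix hNN hNhalf
          hNdelta ω (b i) (a (i+1)) (by have := hgap i (by omega); omega) (x i)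
          (orb θ F ω (b (i+1)) q' (a (i+1)))
        have hGq' : ∀ j : ℤ, a (i+1) ≤ j →
            dist (orb θ F ω (b (i+1)) q' j) (orb θ F ω (b i) q j)
              ≤ 2*η*Real.exp (-((j : ℝ) - (a (i+1))) * lam) := by
          intro j hj
          have h1 := hG j hj
          rwa [orb_orb θ F ω (b (i+1)) (a (i+1)) j q'] at h1
        have hexp1 : ∀ j : ℤ, a (i+1) ≤ j → Real.exp (-((j : ℝ) - (a (i+1))) * lam) ≤ 1 := by
          intro j hj
          have hjr : ((a (i+1) : ℤ) : ℝ) ≤ (j : ℝ) := by exact_mod_cast hj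
          have : Real.exp (-((j : ℝ) - (a (i+1))) * lam) ≤ Real.exp 0 :=
            Real.exp_le_exp.mpr (by nlinarith)
          simpa using this
        have hexpd : ∀ (d : ℕ) (j : ℤ), a (i+1) + (N : ℤ) * d ≤ j →
            Real.exp (-((j : ℝ) - (a (i+1))) * lam) ≤ (1/2 : ℝ)^d := by
          intro d j hj
          have hjr : ((N : ℝ) * d) ≤ (j : ℝ) - (a (i+1)) := by
            have h0 : (N : ℤ) * d ≤ j - a (i+1) := by linarith
            exact_mod_cast h0
          calc Real.exp (-((j : ℝ) - (a (i+1))) * lam)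
              ≤ Real.exp (-((N : ℝ) * d) * lam) :=
                Real.exp_le_exp.mpr (by nlinarith [mul_le_mul_of_nonneg_right hjr hlam.le])
            _ = (Real.exp (-(N : ℝ) * lam))^d := by
                rw [show -((N : ℝ) * d) * lam = (d : ℕ) * (-(N : ℝ) * lam) from by push_cast; ring,
                  Real.exp_nat_mul]
            _ ≤ (1/2 : ℝ)^d := pow_le_pow_left₀ (Real.exp_nonneg _) hNhalf d
        refine ⟨q, fun j hj => ?_, ?_, ?_⟩
        · rw [← orb_zero θ F ω (x i) j]; exact hA j hj
        · intro m hm1 hm2 j hj1 hj2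
          by_cases hmi : m = i + 1
          · subst hmi
            have h1 : dist (fIterZ θ F ω j (x (i+1))) (orb θ F ω (b (i+1)) q' j) ≤ η :=
              hA' j hj2
            have h2 := hGq' j hj1
            have he := hexp1 j hj1
            rw [show (i+1) - i = 1 from by omega, pow_one]
            have htri := dist_triangle (fIterZ θ F ω j (x (i+1)))
              (orb θ F ω (b (i+1)) q' j) (orb θ F ω (b i) q j)
            linarith [mul_le_mul_of_nonneg_left he (by positivity : (0:ℝ) ≤ 2*η)]
          · set d : ℕ := m - (i+1) with hd
            have hgap2 : a (i+1) + (N : ℤ) * d ≤ a m := by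
              have := hgap' (i+1) d (by omega) (by omega)
              rwa [show (i+1) + d = m from by omega] at this
            have haij : a (i+1) ≤ j := by
              have h0 : (0 : ℤ) ≤ (N : ℤ) * d := by positivity
              linarith
            have h1 := hB' m (by omega) hm2 j hj1 hj2
            rw [show m - (i+1) = d from by omega] at h1
            have h2 := hGq' j haij
            have he := hexpd d j (by linarith)
            have htri := dist_triangle (fIterZ θ F ω j (x m))
              (orb θ F ω (b (i+1)) q' j) (orb θ F ω (b i) q j)
            rw [show m - i = d + 1 from by omega, pow_succ]
            linarith [mul_le_mul_of_nonneg_left he (by positivity : (0:ℝ) ≤ 2*η)]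
        · intro j hj
          set d : ℕ := k - i with hd
          have hgap2 : a (i+1) + (N : ℤ) * d ≤ a (k+1) := by
            have := hgap' (i+1) d (by omega) (by omega)
            rwa [show (i+1) + d = k + 1 from by omega] at this
          have haij : a (i+1) ≤ j := by
            have h0 : (0 : ℤ) ≤ (N : ℤ) * d := by positivity
            linarith
          have h1 := hC' j hj
          rw [show k + 1 - (i+1) = d from by omega] at h1
          have h2 := hGq' j haij
          have he := hexpd d j (by linarith)
          have htri := dist_triangle (fIterZ θ F ω j (x 0))
            (orb θ F ω (b (i+1)) q' j) (orb θ F ω (b i) q j)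
          rw [show k + 1 - i = d + 1 from by omega, pow_succ]
          linarith [mul_le_mul_of_nonneg_left he (by positivity : (0:ℝ) ≤ 2*η)]
  obtain ⟨q₀, hA, hB, hC⟩ := main k 0 (by omega)
  refine ⟨orb θ F ω (b 0) q₀ 0, ?_, ?_, ?_⟩
  all_goals
    have hz : ∀ j : ℤ, fIterZ θ F ω j (orb θ F ω (b 0) q₀ 0) = orb θ F ω (b 0) q₀ j := by
      intro j
      rw [← orb_zero θ F ω (orb θ F ω (b 0) q₀ 0) j, orb_orb θ F ω (b 0) 0 j q₀]
  · intro i h1 hik j hj1 hj2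
    rw [hz j]
    refine le_trans (hB i (by omega) hik j hj1 hj2) ?_
    have ht : (0:ℝ) ≤ (1/2 : ℝ)^(i - 0) := by positivity
    linarith [mul_nonneg hη.le ht]
  · intro j hj
    rw [hz j]
    refine le_trans (hC j hj) ?_
    have ht : (0:ℝ) ≤ (1/2 : ℝ)^(k + 1 - 0) := by positivity
    linarith [mul_nonneg hη.le ht]
  · intro j hj
    rw [hz j]
    refine le_trans (hA j hj) ?_
    linarith


end Paper
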